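/- In the agglomerative clustering setting with consistent propensity-score estimates and a true club structure, the Ward distance (|Q||Q'|/(|Q|+|Q'|))·‖mean(Q) − mean(Q')‖² between two estimated clusters Q, Q' contained in the same club converges in probability to 0, while the Ward distance between two clusters containing elements of distinct clubs k ≠ k' converges in probability to a strictly positive constant. -/

import Mathlib

open MeasureTheory Filter

lemma tendstoInMeasure_comp_const
    {Ω : Type*} [MeasurableSpace Ω] (μ : Measure Ω)
    {J : Type*} [Fintype J]
    (f : ℕ → J → Ω → ℝ) (p : J → ℝ)
    (h : ∀ z, TendstoInMeasure μ (fun n => f n z) atTop (fun _ => p z))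
    (F : (J → ℝ) → ℝ) (hF : Continuous F) :
    TendstoInMeasure μ (fun n ω => F (fun z => f n z ω)) atTop (fun _ => F p) := by
  rw [tendstoInMeasure_iff_dist]
  intro ε hε
  obtain ⟨δ, hδ, hδF⟩ := Metric.continuousAt_iff.mp (hF.continuousAt (x := p)) ε hε
  have hsub : ∀ n, {ω | ε ≤ dist (F (fun z => f n z ω)) (F p)} ⊆
      ⋃ z : J, {ω | δ ≤ dist (f n z ω) (p z)} := by
    intro n ω hω
    simp only [Set.mem_setOf_eq] at hω
    by_contra hc
    simp only [Set.mem_iUnion, Set.mem_setOf_eq, not_exists, not_le] at hc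
    have : dist (fun z => f n z ω) p < δ := (dist_pi_lt_iff hδ).mpr hc
    exact absurd (hδF this) (not_lt.mpr hω)
  have hbound : ∀ n, μ {ω | ε ≤ dist (F (fun z => f n z ω)) (F p)} ≤
      ∑ z : J, μ {ω | δ ≤ dist (f n z ω) (p z)} :=
    fun n => (measure_mono (hsub n)).trans (measure_iUnion_fintype_le _ _)
  have hsum : Tendsto (fun n => ∑ z : J, μ {ω | δ ≤ dist (f n z ω) (p z)})
      atTop (nhds 0) := by
    have := tendsto_finset_sum (Finset.univ : Finset J)
      (fun z _ => tendstoInMeasure_iff_dist.mp (h z) δ hδ)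
    simpa using this
  exact tendsto_of_tendsto_of_tendsto_of_le_of_le tendsto_const_nhds hsum
    (fun n => zero_le) hbound

theorem ward_distance_limits
    {Ω : Type*} [MeasurableSpace Ω] (μ : Measure Ω) [IsProbabilityMeasure μ]
    {J K : Type*} [Fintype J] [DecidableEq J]
    (club : J → K) (pk : K → ℝ) (hdistinct : Function.Injective pk)
    (phat : ℕ → J → Ω → ℝ)
    (hcons : ∀ z, TendstoInMeasure μ (fun n => phat n z) atTop
      (fun _ => pk (club z)))
    (ward : Finset J → Finset J → ℕ → Ω → ℝ)
    (hward : ∀ Q Q' n ω, ward Q Q' n ω =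
      ((Q.card : ℝ) * Q'.card / (Q.card + Q'.card)) *
        ((∑ z ∈ Q, phat n z ω) / Q.card - (∑ z ∈ Q', phat n z ω) / Q'.card) ^ 2) :
    (∀ (Q Q' : Finset J) (k : K), Q.Nonempty → Q'.Nonempty →
      (∀ z ∈ Q, club z = k) → (∀ z ∈ Q', club z = k) →
      TendstoInMeasure μ (ward Q Q') atTop (fun _ => (0 : ℝ))) ∧
    (∀ (Q Q' : Finset J) (k k' : K), Q.Nonempty → Q'.Nonempty → k ≠ k' →
      (∀ z ∈ Q, club z = k) → (∀ z ∈ Q', club z = k') →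
      ∃ d : ℝ, 0 < d ∧ TendstoInMeasure μ (ward Q Q') atTop (fun _ => d)) := by
  -- general fact: ward Q Q' converges in measure to the value of the same
  -- formula at the true propensities.
  have key : ∀ Q Q' : Finset J,
      TendstoInMeasure μ (ward Q Q') atTop (fun _ =>
        ((Q.card : ℝ) * Q'.card / (Q.card + Q'.card)) *
          ((∑ z ∈ Q, pk (club z)) / Q.card - (∑ z ∈ Q', pk (club z)) / Q'.card) ^ 2) := by
    intro Q Q'
    set F : (J → ℝ) → ℝ := fun v =>
      ((Q.card : ℝ) * Q'.card / (Q.card + Q'.card)) *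
        ((∑ z ∈ Q, v z) / Q.card - (∑ z ∈ Q', v z) / Q'.card) ^ 2 with hFdef
    have hF : Continuous F := by
      apply Continuous.mul continuous_const
      apply Continuous.pow
      exact ((continuous_finset_sum Q fun z _ => continuous_apply z).div_const _).sub
        ((continuous_finset_sum Q' fun z _ => continuous_apply z).div_const _)
    have := tendstoInMeasure_comp_const μ phat (fun z => pk (club z)) hcons F hF
    have heq : (fun n ω => F (fun z => phat n z ω)) = ward Q Q' := by
      funext n ω; rw [hward]
    rwa [heq] at this
  have mean_eq : ∀ (Q : Finset J) (k : K), Q.Nonempty → (∀ z ∈ Q, club z = k) →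
      (∑ z ∈ Q, pk (club z)) / Q.card = pk k := by
    intro Q k hQ hclub
    have : ∑ z ∈ Q, pk (club z) = Q.card * pk k := by
      rw [Finset.sum_congr rfl fun z hz => by rw [hclub z hz]]
      simp [mul_comm]
    have hc : (Q.card : ℝ) ≠ 0 :=
      Nat.cast_ne_zero.mpr (Finset.card_ne_zero_of_mem hQ.choose_spec)
    rw [this]; field_simp
  constructor
  · intro Q Q' k hQ hQ' hcQ hcQ'
    have := key Q Q'
    rwa [mean_eq Q k hQ hcQ, mean_eq Q' k hQ' hcQ', sub_self, zero_pow two_ne_zero,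
      mul_zero] at this
  · intro Q Q' k k' hQ hQ' hkk' hcQ hcQ'
    have hcQ0 : (0:ℝ) < Q.card := by exact_mod_cast Finset.card_pos.mpr hQ
    have hcQ'0 : (0:ℝ) < Q'.card := by exact_mod_cast Finset.card_pos.mpr hQ'
    refine ⟨((Q.card : ℝ) * Q'.card / (Q.card + Q'.card)) * (pk k - pk k') ^ 2,
      ?_, ?_⟩
    · have hne : pk k - pk k' ≠ 0 := sub_ne_zero.mpr fun h => hkk' (hdistinct h)
      apply mul_pos (div_pos (mul_pos hcQ0 hcQ'0) (by linarith))
      positivity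
    · have := key Q Q'
      rwa [mean_eq Q k hQ hcQ, mean_eq Q' k' hQ' hcQ'] at this
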